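/- If H^T is a compact operator, then U(t_1) − e^{-iH_0 t_1 − i v P_1 ∫_0^{t_1} φ(τ)dτ} is a compact operator, and likewise U^*(t_1) − e^{iH_0 t_1 + i v P_1 ∫_0^{t_1} φ(τ)dτ} is compact. -/

import Mathlib

noncomputable section

open MeasureTheory NormedSpace

/-- The interval integral of a compact-operator-valued integrable function is compact. -/
lemma isCompactOperator_intervalIntegral {ℋ : Type*} [NormedAddCommGroup ℋ]
    [InnerProductSpace ℂ ℋ] [CompleteSpace ℋ] {f : ℝ → (ℋ →L[ℂ] ℋ)} {a b : ℝ}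
    (hf : IntervalIntegrable f volume a b)
    (hc : ∀ s, IsCompactOperator ⇑(f s)) :
    IsCompactOperator ⇑(∫ s in a..b, f s) := by
  set S : Submodule ℂ (ℋ →L[ℂ] ℋ) := compactOperator (RingHom.id ℂ) ℋ ℋ with hSdef
  haveI hS : IsClosed (S : Set (ℋ →L[ℂ] ℋ)) := isClosed_setOf_isCompactOperator
  let q : (ℋ →L[ℂ] ℋ) →L[ℂ] ((ℋ →L[ℂ] ℋ) ⧸ S) := ⟨S.mkQ, continuous_quot_mk⟩
  have hmem : (∫ s in a..b, f s) ∈ S := by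
    rw [← Submodule.Quotient.mk_eq_zero S]
    have h1 : Submodule.Quotient.mk (p := S) (∫ s in a..b, f s) = q (∫ s in a..b, f s) := rfl
    rw [h1, ← q.intervalIntegral_comp_comm hf]
    have h2 : ∀ s, q (f s) = 0 := fun s => (Submodule.Quotient.mk_eq_zero S).mpr (hc s)
    simp [h2]
  exact hmem

/-- Derivative of the exponential of a commuting pencil. -/
lemma hasDerivAt_exp_pencil {𝔸 : Type*} [NormedRing 𝔸] [NormedAlgebra ℂ 𝔸] [CompleteSpace 𝔸]
    {B C : 𝔸} (hBC : Commute B C) {f g : ℝ → ℂ} {f' g' : ℂ} {t : ℝ}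
    (hf : HasDerivAt f f' t) (hg : HasDerivAt g g' t) :
    HasDerivAt (fun s => exp (f s • B + g s • C))
      ((f' • B + g' • C) * exp (f t • B + g t • C)) t := by
  letI : NormedAlgebra ℚ 𝔸 := .restrictScalars ℚ ℂ 𝔸
  have key : ∀ s, exp (f s • B + g s • C) = exp (f s • B) * exp (g s • C) := fun s =>
    exp_add_of_commute ((hBC.smul_left (f s)).smul_right (g s))
  have h1 : HasDerivAt (fun s => exp (f s • B)) (f' • (exp (f t • B) * B)) t :=
    (hasDerivAt_exp_smul_const B (f t)).scomp t hf
  have h2 : HasDerivAt (fun s => exp (g s • C)) (g' • (exp (g t • C) * C)) t :=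
    (hasDerivAt_exp_smul_const C (g t)).scomp t hg
  have h := h1.mul h2
  simp only [Pi.mul_def, ← key] at h
  convert h using 1
  rw [key]
  set E1 := exp (f t • B)
  set E2 := exp (g t • C)
  have hBE1 : Commute B E1 := ((Commute.refl B).smul_right (f t)).exp_right
  have hBE2 : Commute B E2 := (hBC.smul_right (g t)).exp_right
  have hCE1 : Commute C E1 := (hBC.symm.smul_right (f t)).exp_right
  have hCE2 : Commute C E2 := ((Commute.refl C).smul_right (g t)).exp_right
  simp only [add_mul, smul_mul_assoc, mul_smul_comm]
  congr 1
  · congr 1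
    rw [← mul_assoc, ← hBE1.eq, mul_assoc]
  · congr 1
    rw [← mul_assoc, hCE1.eq, mul_assoc, hCE2.eq]

/-- Differentiability of the pointwise star (adjoint) of an operator-valued function. -/
lemma HasDerivAt.star_clm {ℋ : Type*} [NormedAddCommGroup ℋ] [InnerProductSpace ℂ ℋ]
    [CompleteSpace ℋ] {f : ℝ → (ℋ →L[ℂ] ℋ)} {f' : ℋ →L[ℂ] ℋ} {t : ℝ}
    (hf : HasDerivAt f f' t) :
    HasDerivAt (fun s => star (f s)) (star f') t := by
  let st : (ℋ →L[ℂ] ℋ) →L[ℝ] (ℋ →L[ℂ] ℋ) :=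
    { toFun := star
      map_add' := star_add
      map_smul' := by
        intro r x
        simp only [RingHom.id_apply]
        rw [show r • x = (r : ℂ) • x from (algebraMap_smul ℂ r x).symm, star_smul]
        simp [Complex.star_def, Complex.conj_ofReal, algebraMap_smul]
      cont := continuous_star }
  exact st.hasFDerivAt.comp_hasDerivAt t hf

set_option maxHeartbeats 1000000 in
/-- If `H^T` is a compact operator, then
`U(t₁) − e^{-iH₀t₁ − ivP₁∫₀^{t₁}φ}` is compact, and likewise
`U^*(t₁) − e^{iH₀t₁ + ivP₁∫₀^{t₁}φ}` is compact.  Here `H₀` is bounded self-adjoint and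
commutes with the orthogonal projection `P₁`, `H^T` is compact self-adjoint, `φ` is
continuous, and `U` is the propagator solving `i∂ₜU(t) = (H₀ + H^T + vφ(t)P₁)U(t)`,
`U(0) = I`. -/
theorem propagator_compact_difference
    {ℋ : Type*} [NormedAddCommGroup ℋ] [InnerProductSpace ℂ ℋ] [CompleteSpace ℋ]
    (H₀ HT P₁ : ℋ →L[ℂ] ℋ)
    (hH₀ : IsSelfAdjoint H₀) (hHT : IsSelfAdjoint HT)
    (hHTcompact : IsCompactOperator (⇑HT))
    (hP₁ : IsSelfAdjoint P₁ ∧ IsIdempotentElem P₁)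
    (hcomm : H₀ * P₁ = P₁ * H₀)
    (v : ℝ) (φ : ℝ → ℝ) (hφ : Continuous φ)
    (t₁ : ℝ) (ht₁ : 0 < t₁)
    (U : ℝ → (ℋ →L[ℂ] ℋ))
    (hU0 : U 0 = 1)
    (hU : ∀ t : ℝ, HasDerivAt U ((-Complex.I) • ((H₀ + HT + ((v * φ t : ℝ) : ℂ) • P₁) * U t)) t) :
    IsCompactOperator
        (⇑(U t₁ - NormedSpace.exp ((-Complex.I * (t₁ : ℂ)) • H₀
            + (-Complex.I * ((v * ∫ τ in (0:ℝ)..t₁, φ τ : ℝ) : ℂ)) • P₁)))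
    ∧ IsCompactOperator
        (⇑(ContinuousLinearMap.adjoint (U t₁) - NormedSpace.exp ((Complex.I * (t₁ : ℂ)) • H₀
            + (Complex.I * ((v * ∫ τ in (0:ℝ)..t₁, φ τ : ℝ) : ℂ)) • P₁))) := by
  obtain ⟨hP₁sa, -⟩ := hP₁
  have hcHP : Commute H₀ P₁ := hcomm
  -- pencil commutation facts
  have hpc : ∀ a b c d : ℂ, Commute (a • H₀ + b • P₁) (c • H₀ + d • P₁) := by
    intro a b c d
    exact Commute.add_left
      (Commute.add_right (((Commute.refl H₀).smul_left a).smul_right c)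
        ((hcHP.smul_left a).smul_right d))
      (Commute.add_right ((hcHP.symm.smul_left b).smul_right c)
        (((Commute.refl P₁).smul_left b).smul_right d))
  have hpcH : ∀ a b : ℂ, Commute (a • H₀ + b • P₁) H₀ := fun a b =>
    Commute.add_left ((Commute.refl H₀).smul_left a) (hcHP.symm.smul_left b)
  have hpcP : ∀ a b : ℂ, Commute (a • H₀ + b • P₁) P₁ := fun a b =>
    Commute.add_left (hcHP.smul_left a) ((Commute.refl P₁).smul_left b)
  -- the antiderivative of φ
  set Φ : ℝ → ℝ := fun t => ∫ τ in (0:ℝ)..t, φ τ with hΦdef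
  have hΦd : ∀ t, HasDerivAt Φ (φ t) t := fun t => (hφ.integral_hasStrictDerivAt 0 t).hasDerivAt
  have hΦ0 : Φ 0 = 0 := intervalIntegral.integral_same
  -- scalar coefficients
  set q₁ : ℝ → ℂ := fun s => -Complex.I * (s : ℂ) with hq₁def
  set q₂ : ℝ → ℂ := fun s => -Complex.I * ((v * Φ s : ℝ) : ℂ) with hq₂def
  set r₁ : ℝ → ℂ := fun s => Complex.I * (s : ℂ) with hr₁def
  set r₂ : ℝ → ℂ := fun s => Complex.I * ((v * Φ s : ℝ) : ℂ) with hr₂def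
  have hq₁d : ∀ t, HasDerivAt q₁ (-Complex.I) t := by
    intro t
    have := (Complex.ofRealCLM.hasDerivAt (x := t)).const_mul (-Complex.I)
    simpa [hq₁def] using this
  have hr₁d : ∀ t, HasDerivAt r₁ Complex.I t := by
    intro t
    have := (Complex.ofRealCLM.hasDerivAt (x := t)).const_mul (Complex.I)
    simpa [hr₁def] using this
  have hvd : ∀ t, HasDerivAt (fun s => ((v * Φ s : ℝ) : ℂ)) ((v * φ t : ℝ) : ℂ) t := by
    intro t
    exact Complex.ofRealCLM.hasFDerivAt.comp_hasDerivAt t ((hΦd t).const_mul v)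
  have hq₂d : ∀ t, HasDerivAt q₂ (-Complex.I * ((v * φ t : ℝ) : ℂ)) t := fun t =>
    (hvd t).const_mul (-Complex.I)
  have hr₂d : ∀ t, HasDerivAt r₂ (Complex.I * ((v * φ t : ℝ) : ℂ)) t := fun t =>
    (hvd t).const_mul Complex.I
  -- the two exponentials
  set eA : ℝ → (ℋ →L[ℂ] ℋ) := fun t => exp (q₁ t • H₀ + q₂ t • P₁) with heAdef
  set eB : ℝ → (ℋ →L[ℂ] ℋ) := fun t => exp (r₁ t • H₀ + r₂ t • P₁) with heBdef
  have heAd : ∀ t, HasDerivAt eA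
      (((-Complex.I) • H₀ + (-Complex.I * ((v * φ t : ℝ) : ℂ)) • P₁) * eA t) t := fun t =>
    hasDerivAt_exp_pencil hcHP (hq₁d t) (hq₂d t)
  have heBd : ∀ t, HasDerivAt eB
      ((Complex.I • H₀ + (Complex.I * ((v * φ t : ℝ) : ℂ)) • P₁) * eB t) t := fun t =>
    hasDerivAt_exp_pencil hcHP (hr₁d t) (hr₂d t)
  -- eA and eB are mutually inverse
  have hsum0 : ∀ t, (q₁ t • H₀ + q₂ t • P₁) + (r₁ t • H₀ + r₂ t • P₁) = 0 := by
    intro t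
    have e1 : q₁ t + r₁ t = 0 := by simp [hq₁def, hr₁def]
    have e2 : q₂ t + r₂ t = 0 := by simp [hq₂def, hr₂def]
    calc (q₁ t • H₀ + q₂ t • P₁) + (r₁ t • H₀ + r₂ t • P₁)
        = (q₁ t + r₁ t) • H₀ + (q₂ t + r₂ t) • P₁ := by module
      _ = 0 := by rw [e1, e2]; simp
  letI : NormedAlgebra ℚ (ℋ →L[ℂ] ℋ) := .restrictScalars ℚ ℂ (ℋ →L[ℂ] ℋ)
  have hAB : ∀ t, eA t * eB t = 1 := by
    intro t
    rw [heAdef, heBdef, ← exp_add_of_commute (hpc _ _ _ _), hsum0 t, exp_zero]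
  have hBA : ∀ t, eB t * eA t = 1 := by
    intro t
    have h0 : (r₁ t • H₀ + r₂ t • P₁) + (q₁ t • H₀ + q₂ t • P₁) = 0 := by
      rw [add_comm]; exact hsum0 t
    rw [heAdef, heBdef, ← exp_add_of_commute (hpc _ _ _ _), h0, exp_zero]
  have contU : Continuous U := continuous_iff_continuousAt.mpr fun t => (hU t).continuousAt
  have conteA : Continuous eA := continuous_iff_continuousAt.mpr fun t => (heAd t).continuousAt
  have conteB : Continuous eB := continuous_iff_continuousAt.mpr fun t => (heBd t).continuousAt
  -- PART 1 --
  have hWd : ∀ t, HasDerivAt (fun s => eB s * U s)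
      ((-Complex.I) • (eB t * (HT * U t))) t := by
    intro t
    have h : HasDerivAt (fun s => eB s * U s) _ t := (heBd t).mul (hU t)
    convert h using 1
    set c : ℂ := ((v * φ t : ℝ) : ℂ) with hcdef
    set L : ℋ →L[ℂ] ℋ := H₀ + c • P₁ with hLdef
    have hsumL : Complex.I • H₀ + (Complex.I * c) • P₁ = Complex.I • L := by
      rw [hLdef, smul_add, smul_smul]
    have hLHT : H₀ + HT + c • P₁ = L + HT := by rw [hLdef]; abel
    have hLB : Commute (r₁ t • H₀ + r₂ t • P₁) L := by
      have h1 : Commute (r₁ t • H₀ + r₂ t • P₁) (c • P₁) := (hpcP _ _).smul_right c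
      exact Commute.add_right (hpcH _ _) h1
    have hLBe : L * eB t = eB t * L := ((hLB.exp_left).symm).eq
    have hkey : L * (eB t * U t) = eB t * (L * U t) := by
      rw [← mul_assoc, hLBe, mul_assoc]
    rw [hsumL, hLHT]
    have h1 : (Complex.I • L) * eB t * U t = Complex.I • (eB t * (L * U t)) := by
      rw [smul_mul_assoc, smul_mul_assoc, mul_assoc, hkey]
    have h2 : eB t * ((-Complex.I) • ((L + HT) * U t))
        = -(Complex.I • (eB t * (L * U t))) + -(Complex.I • (eB t * (HT * U t))) := by
      rw [neg_smul, mul_neg, add_mul, mul_smul_comm, mul_add, smul_add, neg_add]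
    rw [h1, h2, neg_smul]
    abel
  have hGc : ∀ s : ℝ, IsCompactOperator ⇑((-Complex.I) • (eB s * (HT * U s))) := by
    intro s
    have h1 : IsCompactOperator (⇑(eB s) ∘ (⇑HT ∘ ⇑(U s))) :=
      (hHTcompact.comp_clm (U s)).continuous_comp (eB s).continuous
    have h2 : ⇑((-Complex.I) • (eB s * (HT * U s)))
        = (-Complex.I) • (⇑(eB s) ∘ (⇑HT ∘ ⇑(U s))) := rfl
    rw [h2]
    exact h1.smul _
  have contG : Continuous (fun s => (-Complex.I) • (eB s * (HT * U s))) :=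
    ((conteB.mul (continuous_const.mul contU))).const_smul (-Complex.I)
  have hGint : IntervalIntegrable (fun s => (-Complex.I) • (eB s * (HT * U s))) volume 0 t₁ :=
    contG.intervalIntegrable 0 t₁
  have hB0 : eB 0 * U 0 = 1 := by
    have h0 : r₁ 0 • H₀ + r₂ 0 • P₁ = 0 := by
      simp [hr₁def, hr₂def, hΦ0]
    rw [hU0, heBdef, mul_one]
    simp only [h0, exp_zero]
  have hFTC : (∫ s in (0:ℝ)..t₁, (-Complex.I) • (eB s * (HT * U s)))
      = eB t₁ * U t₁ - 1 := by
    rw [intervalIntegral.integral_eq_sub_of_hasDerivAt (fun s _ => hWd s) hGint, hB0]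
  set K : ℋ →L[ℂ] ℋ := ∫ s in (0:ℝ)..t₁, (-Complex.I) • (eB s * (HT * U s)) with hKdef
  have hKc : IsCompactOperator ⇑K := isCompactOperator_intervalIntegral hGint hGc
  have hBU : eB t₁ * U t₁ = 1 + K := by
    rw [hFTC]; abel
  have hU1 : U t₁ = eA t₁ * (1 + K) := by
    calc U t₁ = (eA t₁ * eB t₁) * U t₁ := by rw [hAB t₁, one_mul]
      _ = eA t₁ * (eB t₁ * U t₁) := by rw [mul_assoc]
      _ = eA t₁ * (1 + K) := by rw [hBU]
  have hdiff1 : U t₁ - eA t₁ = eA t₁ * K := by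
    rw [hU1, mul_add, mul_one, add_sub_cancel_left]
  have part1 : IsCompactOperator ⇑(U t₁ - eA t₁) := by
    rw [hdiff1]
    have h2 : ⇑(eA t₁ * K) = ⇑(eA t₁) ∘ ⇑K := rfl
    rw [h2]
    exact hKc.continuous_comp (eA t₁).continuous
  -- PART 2 --
  have hstU : ∀ t, HasDerivAt (fun s => star (U s))
      (star ((-Complex.I) • ((H₀ + HT + ((v * φ t : ℝ) : ℂ) • P₁) * U t))) t := fun t =>
    (hU t).star_clm
  have hstar_deriv : ∀ t, star ((-Complex.I) • ((H₀ + HT + ((v * φ t : ℝ) : ℂ) • P₁) * U t))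
      = Complex.I • (star (U t) * (H₀ + HT + ((v * φ t : ℝ) : ℂ) • P₁)) := by
    intro t
    rw [star_smul, star_mul, star_add, star_add, star_smul]
    rw [hH₀.star_eq, hHT.star_eq, hP₁sa.star_eq]
    simp [Complex.star_def, Complex.conj_ofReal]
  have hMd : ∀ t, HasDerivAt (fun s => star (U s) * eA s)
      (Complex.I • (star (U t) * (HT * eA t))) t := by
    intro t
    have h : HasDerivAt (fun s => star (U s) * eA s) _ t := (hstU t).mul (heAd t)
    rw [hstar_deriv t] at h
    convert h using 1
    set c : ℂ := ((v * φ t : ℝ) : ℂ) with hcdef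
    set L : ℋ →L[ℂ] ℋ := H₀ + c • P₁ with hLdef
    have hsumL : (-Complex.I) • H₀ + (-Complex.I * c) • P₁ = (-Complex.I) • L := by
      rw [hLdef, smul_add, smul_smul]
    have hLHT : H₀ + HT + c • P₁ = L + HT := by rw [hLdef]; abel
    rw [hsumL, hLHT]
    have h1 : (Complex.I • (star (U t) * (L + HT))) * eA t
        = Complex.I • (star (U t) * (L * eA t)) + Complex.I • (star (U t) * (HT * eA t)) := by
      rw [smul_mul_assoc, mul_add, add_mul, mul_assoc, mul_assoc, smul_add]
    have h2 : star (U t) * (((-Complex.I) • L) * eA t)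
        = -(Complex.I • (star (U t) * (L * eA t))) := by
      rw [smul_mul_assoc, neg_smul, mul_neg, mul_smul_comm]
    rw [h1, h2]
    abel
  have hG₂c : ∀ s : ℝ, IsCompactOperator ⇑(Complex.I • (star (U s) * (HT * eA s))) := by
    intro s
    have h1 : IsCompactOperator (⇑(star (U s)) ∘ (⇑HT ∘ ⇑(eA s))) :=
      (hHTcompact.comp_clm (eA s)).continuous_comp (star (U s)).continuous
    have h2 : ⇑(Complex.I • (star (U s) * (HT * eA s)))
        = Complex.I • (⇑(star (U s)) ∘ (⇑HT ∘ ⇑(eA s))) := rfl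
    rw [h2]
    exact h1.smul _
  have contstU : Continuous (fun s => star (U s)) := continuous_star.comp contU
  have contG₂ : Continuous (fun s => Complex.I • (star (U s) * (HT * eA s))) :=
    ((contstU.mul (continuous_const.mul conteA))).const_smul Complex.I
  have hG₂int : IntervalIntegrable (fun s => Complex.I • (star (U s) * (HT * eA s)))
      volume 0 t₁ := contG₂.intervalIntegrable 0 t₁
  have hM0 : star (U 0) * eA 0 = 1 := by
    have h0 : q₁ 0 • H₀ + q₂ 0 • P₁ = 0 := by
      simp [hq₁def, hq₂def, hΦ0]
    rw [hU0, heAdef, star_one, one_mul]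
    simp only [h0, exp_zero]
  have hFTC₂ : (∫ s in (0:ℝ)..t₁, Complex.I • (star (U s) * (HT * eA s)))
      = star (U t₁) * eA t₁ - 1 := by
    rw [intervalIntegral.integral_eq_sub_of_hasDerivAt (fun s _ => hMd s) hG₂int, hM0]
  set K₂ : ℋ →L[ℂ] ℋ := ∫ s in (0:ℝ)..t₁, Complex.I • (star (U s) * (HT * eA s)) with hK₂def
  have hK₂c : IsCompactOperator ⇑K₂ := isCompactOperator_intervalIntegral hG₂int hG₂c
  have hstU1 : star (U t₁) = (1 + K₂) * eB t₁ := by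
    have h1 : star (U t₁) * eA t₁ = 1 + K₂ := by rw [hFTC₂]; abel
    calc star (U t₁) = star (U t₁) * (eA t₁ * eB t₁) := by rw [hAB t₁, mul_one]
      _ = (star (U t₁) * eA t₁) * eB t₁ := by rw [mul_assoc]
      _ = (1 + K₂) * eB t₁ := by rw [h1]
  have hdiff2 : star (U t₁) - eB t₁ = K₂ * eB t₁ := by
    rw [hstU1, add_mul, one_mul, add_sub_cancel_left]
  have part2 : IsCompactOperator ⇑(star (U t₁) - eB t₁) := by
    rw [hdiff2]
    have h2 : ⇑(K₂ * eB t₁) = ⇑K₂ ∘ ⇑(eB t₁) := rfl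
    rw [h2]
    exact hK₂c.comp_clm (eB t₁)
  constructor
  · have e : ((-Complex.I * (t₁ : ℂ)) • H₀
        + (-Complex.I * ((v * ∫ τ in (0:ℝ)..t₁, φ τ : ℝ) : ℂ)) • P₁)
        = q₁ t₁ • H₀ + q₂ t₁ • P₁ := by
      simp only [hq₁def, hq₂def, hΦdef]
    rw [e, show NormedSpace.exp (q₁ t₁ • H₀ + q₂ t₁ • P₁) = eA t₁ from rfl]
    exact part1
  · have hadj : ContinuousLinearMap.adjoint (U t₁) = star (U t₁) :=
      (ContinuousLinearMap.star_eq_adjoint (U t₁)).symm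
    have e : ((Complex.I * (t₁ : ℂ)) • H₀
        + (Complex.I * ((v * ∫ τ in (0:ℝ)..t₁, φ τ : ℝ) : ℂ)) • P₁)
        = r₁ t₁ • H₀ + r₂ t₁ • P₁ := by
      simp only [hr₁def, hr₂def, hΦdef]
    rw [hadj, e, show NormedSpace.exp (r₁ t₁ • H₀ + r₂ t₁ • P₁) = eB t₁ from rfl]
    exact part2
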